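/- The Stieltjes transform m of the semicircle law satisfies the semigroup identity m(z) = e^{t/2}·m(e^{t/2}(z + (1 − e^{−t})·m(z))) for every t ≥ 0 and every z in the upper half-plane. -/
import Mathlib


/-- Free-convolution semigroup identity for the Stieltjes transform `m` of the semicircle law:
`m(z) = e^{t/2} m(e^{t/2}(z + (1 − e^{−t}) m(z)))` for all `t ≥ 0` and `z` in the upper
half-plane. -/
theorem stmt_2 (m : ℂ → ℂ)
    (hmap : ∀ z : ℂ, 0 < z.im → 0 < (m z).im)
    (heq : ∀ z : ℂ, 0 < z.im → (m z) ^ 2 + z * m z + 1 = 0) :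
    ∀ t : ℝ, 0 ≤ t → ∀ z : ℂ, 0 < z.im →
      m z = Complex.exp ((t : ℂ) / 2) *
        m (Complex.exp ((t : ℂ) / 2) * (z + (1 - Complex.exp (-(t : ℂ))) * m z)) := by
  intro t ht z hz
  have hmz := hmap z hz
  have hez := heq z hz
  set c : ℝ := Real.exp (t / 2) with hc
  set s : ℝ := 1 - Real.exp (-t) with hs
  have hcpos : 0 < c := Real.exp_pos _
  have hcne : (c : ℂ) ≠ 0 := by exact_mod_cast hcpos.ne'
  have hsnn : 0 ≤ s := by
    have : Real.exp (-t) ≤ 1 := Real.exp_le_one_iff.mpr (by linarith)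
    simp [hs]; linarith
  have hcast1 : Complex.exp ((t : ℂ) / 2) = (c : ℂ) := by
    rw [hc, Complex.ofReal_exp]
    push_cast
    ring_nf
  have hcast2 : (1 - Complex.exp (-(t : ℂ))) = (s : ℂ) := by
    rw [hs, Complex.ofReal_sub, Complex.ofReal_exp]
    push_cast
    ring_nf
  rw [hcast1, hcast2]
  set M : ℂ := m z with hM
  set w : ℂ := (c : ℂ) * (z + (s : ℂ) * M) with hw
  have hwim : 0 < w.im := by
    have : w.im = c * (z.im + s * M.im) := by
      simp [hw, Complex.mul_im, Complex.add_im, Complex.add_re]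
    rw [this]
    have : 0 ≤ s * M.im := mul_nonneg hsnn hmz.le
    positivity
  set u : ℂ := (c : ℂ)⁻¹ * M with hu
  have huim : 0 < u.im := by
    have : u.im = c⁻¹ * M.im := by
      simp [hu, ← Complex.ofReal_inv, Complex.mul_im]
    rw [this]
    positivity
  -- key algebraic identity: c^2 * s = c^2 - 1 (over ℝ, then ℂ)
  have hcs : (c : ℂ) ^ 2 * (s : ℂ) = (c : ℂ) ^ 2 - 1 := by
    have hcsq : c ^ 2 = Real.exp t := by
      rw [hc, sq, ← Real.exp_add]; ring_nf
    have hinv : Real.exp (-t) = (c ^ 2)⁻¹ := by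
      rw [hcsq, Real.exp_neg]
    have : c ^ 2 * s = c ^ 2 - 1 := by
      rw [hs, hinv]
      field_simp
    exact_mod_cast this
  -- u satisfies the quadratic at w
  have key : u ^ 2 + w * u + 1 = 0 := by
    have expand : u ^ 2 + w * u + 1
        = ((c:ℂ)^2)⁻¹ * (M ^ 2 + ((c:ℂ)^2 * (s:ℂ) + 1) * M ^ 2
            + (c:ℂ)^2 * z * M + (c:ℂ)^2 - M ^ 2) := by
      rw [hu, hw]
      field_simp
      ring
    rw [expand, hcs]
    have : M ^ 2 + ((c:ℂ)^2 - 1 + 1) * M ^ 2 + (c:ℂ)^2 * z * M + (c:ℂ)^2 - M ^ 2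
        = (c:ℂ)^2 * (M ^ 2 + z * M + 1) := by ring
    rw [this, hez, mul_zero, mul_zero]
  have hweq := heq w hwim
  have hfac : (m w - u) * (m w + u + w) = 0 := by
    linear_combination hweq - key
  rcases mul_eq_zero.mp hfac with h | h
  · have : m w = u := sub_eq_zero.mp h
    rw [this, hu]
    field_simp
  · exfalso
    have hmw := hmap w hwim
    have hprod : m w * u = 1 := by
      linear_combination u * h - key
    have huinv : u = (m w)⁻¹ := eq_inv_of_mul_eq_one_right hprod
    have : u.im < 0 := by
      rw [huinv, Complex.inv_im]
      have : 0 < Complex.normSq (m w) := by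
        have : m w ≠ 0 := by
          intro h0; rw [h0] at hmw; simp at hmw
        exact Complex.normSq_pos.mpr this
      exact div_neg_of_neg_of_pos (neg_neg_iff_pos.mpr hmw) this
    linarith
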